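/- Let K be a field and let A ∈ K^{n×n} be invertible. Suppose Θ, R ∈ K^{n×n} and an invertible diagonal matrix D ∈ K^{n×n} satisfy A = Θ · D^{−1} · R and ΘᵗΘ = D, where R is upper triangular with R_{nn} = (det A)². Then for every i with 1 ≤ i ≤ n, the entry in the last column of Θ satisfies Θ_{in} = (−1)^{n+i} · M_{i,n} · det A, where M_{i,n} denotes the (i,n) minor of A, i.e. the determinant of the (n−1)×(n−1) matrix obtained from A by deleting row i and column n. -/

import Mathlib

open Matrix

/-- (Theorem 13 of the paper.)  Let `A` be an invertible
`(n+1) × (n+1)` matrix over a field `K` with a fraction-free QR decomposition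
`A = Θ · D⁻¹ · R`, `ΘᵀΘ = D`, where `R` is upper triangular with last diagonal
entry `(det A)²` and `D` is invertible diagonal.  Then each entry in the last
column of `Θ` is `(−1)^{n+i}` times the corresponding maximal minor of `A`
(delete row `i` and the last column) times `det A`.  (Indices are 0-indexed;
the sign matches the paper's 1-indexed `(−1)^{n+i}` for `n+1`-dimensional `A`.) -/
theorem stmt12 {K : Type*} [Field K] {n : ℕ}
    (A Θ R Dm : Matrix (Fin (n + 1)) (Fin (n + 1)) K)
    (hA : IsUnit A.det)
    (hDdiag : ∀ i j, i ≠ j → Dm i j = 0) (hDunit : IsUnit Dm.det)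
    (hRtri : ∀ i j, j < i → R i j = 0)
    (hRnn : R (Fin.last n) (Fin.last n) = A.det ^ 2)
    (hdec : A = Θ * Dm⁻¹ * R) (hTh : Θᵀ * Θ = Dm) :
    ∀ i : Fin (n + 1),
      Θ i (Fin.last n) =
        (-1) ^ (n + (i : ℕ)) * (A.submatrix i.succAbove Fin.castSucc).det * A.det := by
  intro i
  have hTA : Θᵀ * A = R := by
    rw [hdec, ← Matrix.mul_assoc, ← Matrix.mul_assoc, hTh,
      Matrix.mul_nonsing_inv Dm hDunit, Matrix.one_mul]
  have hT : Θᵀ = R * A⁻¹ := by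
    rw [← hTA, Matrix.mul_assoc, Matrix.mul_nonsing_inv A hA, Matrix.mul_one]
  have h1 : Θ i (Fin.last n) = Θᵀ (Fin.last n) i := rfl
  rw [h1, hT, Matrix.mul_apply]
  rw [Finset.sum_eq_single (Fin.last n)]
  · rw [hRnn, Matrix.nonsing_inv_apply A hA]
    simp only [Matrix.smul_apply, smul_eq_mul,
      Matrix.adjugate_fin_succ_eq_det_submatrix, Fin.succAbove_last, Fin.val_last]
    have hd : A.det ≠ 0 := hA.ne_zero
    rw [Units.val_inv_eq_inv_val, hA.unit_spec, Nat.add_comm (i:ℕ) n]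
    field_simp
  · intro b _ hb
    rw [hRtri _ _ (lt_of_le_of_ne (Fin.le_last b) hb), zero_mul]
  · intro h
    exact absurd (Finset.mem_univ _) h
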